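/- Let w₁, w₂ be closed words of length k+1 with |supp₀(w₁, w₂)| = s, such that every d-cell traversed by w₁ or w₂ is traversed at least twice in total (N_{w₁}(τ) + N_{w₂}(τ) ≥ 2 whenever positive). Let {χ_τ} be i.i.d. centered Bernoulli(p) random variables (χ_τ = Z_τ − p with Z_τ ~ Ber(p)) indexed by d-cells. Then |∏_τ E[χ_τ^{N_{w₁}(τ)+N_{w₂}(τ)}]| ≤ (p(1−p))^{s − 2d}. -/

import Mathlib

open MeasureTheory

/-- The Bernoulli(p) measure: mass `p` at `1` and mass `1 − p` at `0`. -/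
noncomputable def bernoulliMeasure (p : ℝ) : Measure ℝ :=
  ENNReal.ofReal p • Measure.dirac 1 + ENNReal.ofReal (1 - p) • Measure.dirac 0

lemma intdirac (f : ℝ → ℝ) (hf : Measurable f) (a : ℝ) (c : ENNReal) (hc : c ≠ ⊤) :
    Integrable f (c • Measure.dirac a) := by
  have h1 : Integrable f (Measure.dirac a) := by
    refine ⟨hf.aestronglyMeasurable, ?_⟩
    simp [HasFiniteIntegral, lintegral_dirac]
  exact h1.smul_measure hc

lemma bern_int (p : ℝ) (hp0 : 0 ≤ p) (hp1 : p ≤ 1) (f : ℝ → ℝ) (hf : Measurable f) :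
    ∫ x, f x ∂(bernoulliMeasure p) = p * f 1 + (1 - p) * f 0 := by
  rw [bernoulliMeasure, integral_add_measure (intdirac f hf 1 _ ENNReal.ofReal_ne_top)
    (intdirac f hf 0 _ ENNReal.ofReal_ne_top), integral_smul_measure, integral_smul_measure,
    integral_dirac, integral_dirac, ENNReal.toReal_ofReal hp0,
    ENNReal.toReal_ofReal (by linarith : (0:ℝ) ≤ 1 - p)]
  simp [smul_eq_mul]

lemma moment_bound (p : ℝ) (hp0 : 0 ≤ p) (hp1 : p ≤ 1) (m : ℕ) (hm : 2 ≤ m) :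
    |∫ x, (x - p) ^ m ∂(bernoulliMeasure p)| ≤ p * (1 - p) := by
  rw [bern_int p hp0 hp1 _ (by measurability)]
  have hq : 0 ≤ 1 - p := by linarith
  have e0 : (0 - p : ℝ) ^ m = (-1) ^ m * p ^ m := by
    rw [zero_sub, neg_pow]
  have h1 : |p * (1 - p) ^ m + (1 - p) * (0 - p) ^ m| ≤ p * (1 - p) ^ m + (1 - p) * p ^ m := by
    calc |p * (1 - p) ^ m + (1 - p) * (0 - p) ^ m|
        ≤ |p * (1 - p) ^ m| + |(1 - p) * (0 - p) ^ m| := abs_add_le _ _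
      _ = p * (1 - p) ^ m + (1 - p) * p ^ m := by
          rw [abs_of_nonneg (by positivity), abs_mul, abs_of_nonneg hq, abs_pow, abs_of_nonpos
            (by linarith : (0:ℝ) - p ≤ 0)]
          simp
  refine h1.trans ?_
  obtain ⟨n, rfl⟩ : ∃ n, m = n + 1 := ⟨m - 1, by omega⟩
  have hn : 1 ≤ n := by omega
  have h2 : (1 - p) ^ n ≤ 1 - p := by
    calc (1 - p) ^ n ≤ (1 - p) ^ 1 := pow_le_pow_of_le_one hq (by linarith) hn
      _ = 1 - p := pow_one _
  have h3 : p ^ n ≤ p := by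
    calc p ^ n ≤ p ^ 1 := pow_le_pow_of_le_one hp0 hp1 hn
      _ = p := pow_one _
  have h4 : (1 - p) ^ n + p ^ n ≤ 1 := by linarith
  have h5 : 0 ≤ (1-p)^n := by positivity
  have h6 : 0 ≤ p^n := by positivity
  calc p * (1 - p) ^ (n+1) + (1 - p) * p ^ (n+1)
      = p * (1 - p) * ((1 - p) ^ n + p ^ n) := by ring
    _ ≤ p * (1 - p) * 1 := by
        apply mul_le_mul_of_nonneg_left h4 (by positivity)
    _ = p * (1 - p) := mul_one _

lemma key (d k : ℕ) (σ : ℕ → Finset ℕ)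
    (hcard : ∀ i ≤ k, (σ i).card = d)
    (hcell : ∀ i < k, (σ i ∪ σ (i + 1)).card = d + 1)
    (V : Finset ℕ) (C : Finset (Finset ℕ)) (hC : ∀ τ ∈ C, τ ⊆ V) :
    ∀ n ≤ k, (V ∪ (Finset.range (n + 1)).biUnion σ).card + C.card ≤
      (V ∪ σ 0).card + (C ∪ (Finset.range n).image (fun i => σ i ∪ σ (i + 1))).card := by
  intro n
  induction n with
  | zero => intro _; simp
  | succ n ih =>
    intro hn
    have ih' := ih (by omega)
    have hrange : Finset.range (n + 2) = insert (n+1) (Finset.range (n + 1)) := by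
      rw [Finset.range_add_one]
    have hsplit : (Finset.range (n + 2)).biUnion σ =
        (Finset.range (n + 1)).biUnion σ ∪ σ (n+1) := by
      rw [hrange, Finset.biUnion_insert, Finset.union_comm]
    set A := V ∪ (Finset.range (n + 1)).biUnion σ with hA
    have hA' : V ∪ (Finset.range (n + 2)).biUnion σ = A ∪ σ (n+1) := by
      rw [hsplit, hA, Finset.union_assoc]
    set D := C ∪ (Finset.range n).image (fun i => σ i ∪ σ (i + 1)) with hD
    have hD' : C ∪ (Finset.range (n+1)).image (fun i => σ i ∪ σ (i + 1)) =
        insert (σ n ∪ σ (n+1)) D := by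
      rw [Finset.range_add_one, Finset.image_insert, Finset.union_insert]
    rw [hA', hD']
    by_cases hmem : σ n ∪ σ (n+1) ∈ D
    · -- old cell: σ (n+1) ⊆ A
      have hsub : σ (n+1) ⊆ A := by
        rcases Finset.mem_union.1 hmem with h | h
        · calc σ (n+1) ⊆ σ n ∪ σ (n+1) := Finset.subset_union_right
            _ ⊆ V := hC _ h
            _ ⊆ A := Finset.subset_union_left
        · obtain ⟨j, hj, hje⟩ := Finset.mem_image.1 h
          have hjn : j < n := Finset.mem_range.1 hj
          calc σ (n+1) ⊆ σ n ∪ σ (n+1) := Finset.subset_union_right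
            _ = σ j ∪ σ (j+1) := hje.symm
            _ ⊆ (Finset.range (n + 1)).biUnion σ := by
                apply Finset.union_subset
                · exact Finset.subset_biUnion_of_mem σ (Finset.mem_range.2 (by omega))
                · exact Finset.subset_biUnion_of_mem σ (Finset.mem_range.2 (by omega))
            _ ⊆ A := Finset.subset_union_right
      rw [Finset.union_eq_left.2 hsub, Finset.insert_eq_self.2 hmem]
      exact ih'
    · -- new cell
      have hcardD : (insert (σ n ∪ σ (n+1)) D).card = D.card + 1 :=
        Finset.card_insert_of_notMem hmem
      have hsn : σ n ⊆ A := by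
        apply Finset.Subset.trans (Finset.subset_biUnion_of_mem σ
          (Finset.mem_range.2 (by omega : n < n + 1))) Finset.subset_union_right
      have h1 : (σ (n+1) \ A).card ≤ 1 := by
        have hsub : σ (n+1) \ A ⊆ σ (n+1) \ σ n := Finset.sdiff_subset_sdiff le_rfl hsn
        have : (σ (n+1) \ σ n).card + (σ n).card = (σ (n+1) ∪ σ n).card :=
          Finset.card_sdiff_add_card _ _
        have hu : (σ (n+1) ∪ σ n).card = d + 1 := by
          rw [Finset.union_comm]; exact hcell n (by omega)
        have hc : (σ n).card = d := hcard n (by omega)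
        have : (σ (n+1) \ σ n).card = 1 := by omega
        calc (σ (n+1) \ A).card ≤ (σ (n+1) \ σ n).card := Finset.card_le_card hsub
          _ = 1 := this
      have h2 : (A ∪ σ (n+1)).card ≤ A.card + 1 := by
        have : (σ (n+1) \ A).card + A.card = (σ (n+1) ∪ A).card :=
          Finset.card_sdiff_add_card _ _
        rw [Finset.union_comm]
        omega
      omega


/-- For closed words `w₁, w₂` of length `k+1` with
`|supp₀(w₁,w₂)| = s` and every traversed `d`-cell traversed at least twice in total,
and i.i.d. centered Bernoulli(p) variables `χ_τ`,
`|∏_τ E[χ_τ^{N_{w₁}(τ)+N_{w₂}(τ)}]| ≤ (p(1−p))^{s−2d}` (product over traversed `d`-cells). -/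
theorem stmt13 (d k s : ℕ) (hd : 2 ≤ d) (hk : 2 ≤ k) (p : ℝ)
    (hp0 : 0 ≤ p) (hp1 : p ≤ 1)
    (σ₁ σ₂ : ℕ → Finset ℕ)
    (hcard₁ : ∀ i ≤ k, (σ₁ i).card = d) (hcard₂ : ∀ i ≤ k, (σ₂ i).card = d)
    (hcell₁ : ∀ i < k, (σ₁ i ∪ σ₁ (i + 1)).card = d + 1)
    (hcell₂ : ∀ i < k, (σ₂ i ∪ σ₂ (i + 1)).card = d + 1)
    (hclosed₁ : σ₁ k = σ₁ 0) (hclosed₂ : σ₂ k = σ₂ 0)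
    (hsupp : ((Finset.range (k + 1)).biUnion σ₁ ∪ (Finset.range (k + 1)).biUnion σ₂).card = s)
    (hN : ∀ τ : Finset ℕ,
      ((Finset.range k).filter (fun i => σ₁ i ∪ σ₁ (i + 1) = τ)).card +
        ((Finset.range k).filter (fun i => σ₂ i ∪ σ₂ (i + 1) = τ)).card ≠ 1) :
    |∏ τ ∈ ((Finset.range k).image (fun i => σ₁ i ∪ σ₁ (i + 1)) ∪
        (Finset.range k).image (fun i => σ₂ i ∪ σ₂ (i + 1))),
        ∫ x, (x - p) ^
          (((Finset.range k).filter (fun i => σ₁ i ∪ σ₁ (i + 1) = τ)).card +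
            ((Finset.range k).filter (fun i => σ₂ i ∪ σ₂ (i + 1) = τ)).card)
          ∂(bernoulliMeasure p)| ≤
      (p * (1 - p)) ^ (s - 2 * d) := by
  set C₁ := (Finset.range k).image (fun i => σ₁ i ∪ σ₁ (i + 1)) with hC₁
  set C₂ := (Finset.range k).image (fun i => σ₂ i ∪ σ₂ (i + 1)) with hC₂
  set V₁ := (Finset.range (k + 1)).biUnion σ₁ with hV₁
  have hq : 0 ≤ 1 - p := by linarith
  have hpq0 : 0 ≤ p * (1 - p) := mul_nonneg hp0 hq
  have hpq1 : p * (1 - p) ≤ 1 := by nlinarith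
  have hCV : ∀ τ ∈ C₁, τ ⊆ V₁ := by
    intro τ hτ
    obtain ⟨j, hj, hje⟩ := Finset.mem_image.1 hτ
    have hjk : j < k := Finset.mem_range.1 hj
    rw [← hje]
    apply Finset.union_subset
    · exact Finset.subset_biUnion_of_mem σ₁ (Finset.mem_range.2 (by omega))
    · exact Finset.subset_biUnion_of_mem σ₁ (Finset.mem_range.2 (by omega))
  have hb1 : (∅ ∪ V₁).card + (∅ : Finset (Finset ℕ)).card ≤
      (∅ ∪ σ₁ 0).card + ((∅ : Finset (Finset ℕ)) ∪ C₁).card :=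
    key d k σ₁ hcard₁ hcell₁ ∅ ∅ (by simp) k le_rfl
  have hb2 : (V₁ ∪ (Finset.range (k + 1)).biUnion σ₂).card + C₁.card ≤
      (V₁ ∪ σ₂ 0).card + (C₁ ∪ C₂).card :=
    key d k σ₂ hcard₂ hcell₂ V₁ C₁ hCV k le_rfl
  simp only [Finset.empty_union, Finset.card_empty] at hb1
  have hcard0 : (σ₁ 0).card = d := hcard₁ 0 (by omega)
  have hcard0' : (σ₂ 0).card = d := hcard₂ 0 (by omega)
  have hV₁C₁ : V₁.card ≤ d + C₁.card := by rw [hcard0] at hb1; omega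
  have hVs : (V₁ ∪ σ₂ 0).card ≤ V₁.card + d := by
    calc (V₁ ∪ σ₂ 0).card ≤ V₁.card + (σ₂ 0).card := Finset.card_union_le _ _
      _ = V₁.card + d := by rw [hcard0']
  have hsS : s ≤ (C₁ ∪ C₂).card + 2 * d := by omega
  have hfac : ∀ τ ∈ C₁ ∪ C₂,
      |∫ x, (x - p) ^
        (((Finset.range k).filter (fun i => σ₁ i ∪ σ₁ (i + 1) = τ)).card +
          ((Finset.range k).filter (fun i => σ₂ i ∪ σ₂ (i + 1) = τ)).card)
        ∂(bernoulliMeasure p)| ≤ p * (1 - p) := by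
    intro τ hτ
    apply moment_bound p hp0 hp1
    set m := ((Finset.range k).filter (fun i => σ₁ i ∪ σ₁ (i + 1) = τ)).card +
          ((Finset.range k).filter (fun i => σ₂ i ∪ σ₂ (i + 1) = τ)).card with hm
    have hpos : 0 < m := by
      rcases Finset.mem_union.1 hτ with h | h <;>
        obtain ⟨j, hj, hje⟩ := Finset.mem_image.1 h
      · have hmem : j ∈ (Finset.range k).filter (fun i => σ₁ i ∪ σ₁ (i + 1) = τ) :=
          Finset.mem_filter.2 ⟨hj, hje⟩
        have := Finset.card_pos.2 ⟨j, hmem⟩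
        omega
      · have hmem : j ∈ (Finset.range k).filter (fun i => σ₂ i ∪ σ₂ (i + 1) = τ) :=
          Finset.mem_filter.2 ⟨hj, hje⟩
        have := Finset.card_pos.2 ⟨j, hmem⟩
        omega
    have := hN τ
    omega
  calc |∏ τ ∈ C₁ ∪ C₂, ∫ x, (x - p) ^
        (((Finset.range k).filter (fun i => σ₁ i ∪ σ₁ (i + 1) = τ)).card +
          ((Finset.range k).filter (fun i => σ₂ i ∪ σ₂ (i + 1) = τ)).card)
        ∂(bernoulliMeasure p)|
      = ∏ τ ∈ C₁ ∪ C₂, |∫ x, (x - p) ^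
        (((Finset.range k).filter (fun i => σ₁ i ∪ σ₁ (i + 1) = τ)).card +
          ((Finset.range k).filter (fun i => σ₂ i ∪ σ₂ (i + 1) = τ)).card)
        ∂(bernoulliMeasure p)| := Finset.abs_prod _ _
    _ ≤ ∏ _τ ∈ C₁ ∪ C₂, (p * (1 - p)) :=
        Finset.prod_le_prod (fun τ _ => abs_nonneg _) hfac
    _ = (p * (1 - p)) ^ (C₁ ∪ C₂).card := Finset.prod_const _
    _ ≤ (p * (1 - p)) ^ (s - 2 * d) := by
        apply pow_le_pow_of_le_one hpq0 hpq1
        omega
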